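/- arXiv:2001.02209 — 4 statements merged into one kernel-verified Lean document; each statement's English description precedes it below -/
import Mathlib

section
/- Let n be a natural number and let g : ℝⁿ → ℝ be differentiable (Differentiable ℝ g), where ℝⁿ = EuclideanSpace ℝ (Fin n). Define h : ℝⁿ × ℝⁿ → ℝ × ℝ by h(x, v) = (g x, fderiv ℝ g x v). Then (i) for all differentiable curves f : ℝ → ℝⁿ and all t ∈ ℝ, h(f t, deriv f t) = (g (f t), deriv (fun s => g (f s)) t); and (ii) h is the unique function ℝⁿ × ℝⁿ → ℝ × ℝ with property (i): any h′ satisfying (i) for all differentiable curves f equals h. -/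
lemma key_chain (n : ℕ) (g : EuclideanSpace ℝ (Fin n) → ℝ) (hg : Differentiable ℝ g)
    (f : ℝ → EuclideanSpace ℝ (Fin n)) (hf : Differentiable ℝ f) (t : ℝ) :
    deriv (fun s => g (f s)) t = fderiv ℝ g (f t) (deriv f t) := by
  have := ((hg (f t)).hasFDerivAt.comp t (hf t).hasFDerivAt).hasDerivAt
  simpa [Function.comp_def] using this.deriv

theorem dual_numbers_representation_exists_unique (n : ℕ)
    (g : EuclideanSpace ℝ (Fin n) → ℝ) (hg : Differentiable ℝ g) :
    (∀ f : ℝ → EuclideanSpace ℝ (Fin n), Differentiable ℝ f → ∀ t : ℝ,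
      (fun p : EuclideanSpace ℝ (Fin n) × EuclideanSpace ℝ (Fin n) =>
          (g p.1, fderiv ℝ g p.1 p.2)) (f t, deriv f t) =
        (g (f t), deriv (fun s => g (f s)) t)) ∧
    (∀ h' : EuclideanSpace ℝ (Fin n) × EuclideanSpace ℝ (Fin n) → ℝ × ℝ,
      (∀ f : ℝ → EuclideanSpace ℝ (Fin n), Differentiable ℝ f → ∀ t : ℝ,
        h' (f t, deriv f t) = (g (f t), deriv (fun s => g (f s)) t)) →
      h' = fun p => (g p.1, fderiv ℝ g p.1 p.2)) := by
  constructor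
  · intro f hf t
    simp [key_chain n g hg f hf t]
  · intro h' hh'
    funext p
    obtain ⟨x, v⟩ := p
    set f : ℝ → EuclideanSpace ℝ (Fin n) := fun s => x + s • v with hfdef
    have hf : Differentiable ℝ f := by
      apply Differentiable.add
      · exact differentiable_const x
      · exact (differentiable_id.smul_const v)
    have hderiv : deriv f 0 = v := by
      have : HasDerivAt f v 0 := by
        have h1 : HasDerivAt (fun s : ℝ => s • v) ((1:ℝ) • v) 0 :=
          (hasDerivAt_id 0).smul_const v
        simpa [hfdef] using h1.const_add x
      exact this.deriv
    have h0 : f 0 = x := by simp [hfdef]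
    have := hh' f hf 0
    rw [hderiv, h0] at this
    rw [this]
    simp [key_chain n g hg f hf 0, h0, hderiv]
end

section
/- Let k be a natural number and let f, g : ℝᵏ → ℝ be differentiable, where ℝᵏ = EuclideanSpace ℝ (Fin k). Define Φ : (ℝ × (ℝ → ℝᵏ)) × (ℝ × (ℝ → ℝᵏ)) → ℝ × (ℝ → ℝᵏ) by Φ((x, x′), (y, y′)) = (x·y, fun z => x′(y·z) + y′(x·z)). Then for every v ∈ ℝᵏ, Φ((f v, fun y => y • gradient f v), (g v, fun y => y • gradient g v)) = ((f v)·(g v), fun y => y • gradient (fun w => f w · g w) v). -/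
def revMul (k : ℕ)
    (p : (ℝ × (ℝ → EuclideanSpace ℝ (Fin k))) × (ℝ × (ℝ → EuclideanSpace ℝ (Fin k)))) :
    ℝ × (ℝ → EuclideanSpace ℝ (Fin k)) :=
  (p.1.1 * p.2.1, fun z => p.1.2 (p.2.1 * z) + p.2.2 (p.1.1 * z))

theorem revMul_correct (k : ℕ) (f g : EuclideanSpace ℝ (Fin k) → ℝ)
    (hf : Differentiable ℝ f) (hg : Differentiable ℝ g) (v : EuclideanSpace ℝ (Fin k)) :
    revMul k ((f v, fun y => y • gradient f v), (g v, fun y => y • gradient g v)) =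
      (f v * g v, fun y => y • gradient (fun w => f w * g w) v) := by
  have hgrad : gradient (fun w => f w * g w) v =
      f v • gradient g v + g v • gradient f v := by
    unfold gradient
    rw [fderiv_fun_mul (hf v) (hg v)]
    simp [map_add, map_smul]
  simp only [revMul, hgrad]
  refine Prod.ext rfl (funext fun y => ?_)
  simp [smul_add, smul_smul, mul_comm, add_comm]
end

section
/- Let k be a natural number, let f : ℝᵏ → ℝ be differentiable (ℝᵏ = EuclideanSpace ℝ (Fin k)), and let σ : ℝ → ℝ be the sigmoid function σ(x) = 1/(1 + exp(−x)). Define Φ : (ℝ × (ℝ → ℝᵏ)) → ℝ × (ℝ → ℝᵏ) by Φ(x, x′) = (σ x, fun z => x′(σ x · (1 − σ x) · z)). Then for every v ∈ ℝᵏ, Φ(f v, fun y => y • gradient f v) = (σ (f v), fun y => y • gradient (fun w => σ (f w)) v). -/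
/-- The sigmoid function `σ(x) = 1 / (1 + e^{-x})`. -/
noncomputable def sigmoid (x : ℝ) : ℝ := 1 / (1 + Real.exp (-x))

/-- The continuation-based (reverse-mode) AD interpretation of the sigmoid:
a real is translated to a pair of a real and a continuation `ℝ → ℝᵏ`. -/
noncomputable def revSigmoid (k : ℕ) (p : ℝ × (ℝ → EuclideanSpace ℝ (Fin k))) :
    ℝ × (ℝ → EuclideanSpace ℝ (Fin k)) :=
  (sigmoid p.1, fun z => p.2 (sigmoid p.1 * (1 - sigmoid p.1) * z))

lemma hasDerivAt_sigmoid (x : ℝ) :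
    HasDerivAt sigmoid (sigmoid x * (1 - sigmoid x)) x := by
  have h : (1:ℝ) + Real.exp (-x) ≠ 0 := by positivity
  have hd : HasDerivAt (fun x : ℝ => 1 + Real.exp (-x)) (-Real.exp (-x)) x := by
    simpa using ((Real.hasDerivAt_exp (-x)).comp x (hasDerivAt_neg x)).const_add 1
  have : HasDerivAt (fun y : ℝ => 1 / (1 + Real.exp (-y))) (Real.exp (-x) / (1 + Real.exp (-x)) ^ 2) x := by
    simpa [one_div, Pi.inv_def] using hd.inv h
  have heq : Real.exp (-x) / (1 + Real.exp (-x)) ^ 2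
      = sigmoid x * (1 - sigmoid x) := by
    unfold sigmoid
    field_simp
    ring
  rw [heq] at this
  exact this

theorem revSigmoid_correct (k : ℕ) (f : EuclideanSpace ℝ (Fin k) → ℝ)
    (hf : Differentiable ℝ f) (v : EuclideanSpace ℝ (Fin k)) :
    revSigmoid k (f v, fun y => y • gradient f v) =
      (sigmoid (f v), fun y => y • gradient (fun w => sigmoid (f w)) v) := by
  set c := sigmoid (f v) * (1 - sigmoid (f v)) with hc
  have h1 : HasGradientAt f (gradient f v) v := (hf v).hasGradientAt
  have h2 : HasFDerivAt (fun w => sigmoid (f w)) (c • (InnerProductSpace.toDual ℝ _ (gradient f v) : EuclideanSpace ℝ (Fin k) →L[ℝ] ℝ)) v :=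
    (hasDerivAt_sigmoid (f v)).comp_hasFDerivAt v h1.hasFDerivAt
  have h3 : HasGradientAt (fun w => sigmoid (f w)) (c • gradient f v) v := by
    rw [hasGradientAt_iff_hasFDerivAt, map_smul]
    exact h2
  have hgrad := h3.gradient
  unfold revSigmoid
  refine Prod.ext rfl ?_
  funext y
  simp only [hgrad, smul_smul, ← hc]
  rw [mul_comm]
end

section
/- Let E and E′ be finite-dimensional real normed vector spaces, and let M and M′ be smooth (C^∞) manifolds without boundary modeled on E and E′ respectively. Then there is a diffeomorphism between the tangent bundle of the product manifold M × M′ and the product of the tangent bundles, TangentBundle (M × M′) ≃ TangentBundle M × TangentBundle M′, which over each point (x, x′) restricts to the canonical linear identification of tangent spaces T_{(x,x′)}(M × M′) ≅ T_x M × T_{x′} M′. -/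
open scoped Manifold
open Set Bundle

section Aux

variable {E : Type*} [NormedAddCommGroup E] [NormedSpace ℝ E]
  {E' : Type*} [NormedAddCommGroup E'] [NormedSpace ℝ E']
  {M : Type*} [TopologicalSpace M] [ChartedSpace E M]
  [IsManifold (𝓘(ℝ, E)) (⊤ : ℕ∞) M]
  {M' : Type*} [TopologicalSpace M'] [ChartedSpace E' M']
  [IsManifold (𝓘(ℝ, E')) (⊤ : ℕ∞) M']

lemma tangentCoordChange_prod_aux {x y : M} {x' y' : M'}
    (h : x ∈ (extChartAt 𝓘(ℝ, E) y).source) (h' : x' ∈ (extChartAt 𝓘(ℝ, E') y').source)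
    (v : E) (v' : E') :
    tangentCoordChange ((𝓘(ℝ, E)).prod (𝓘(ℝ, E'))) (x, x') (y, y') (x, x') (v, v') =
      (tangentCoordChange 𝓘(ℝ, E) x y x v, tangentCoordChange 𝓘(ℝ, E') x' y' x' v') := by
  have hx : x ∈ (extChartAt 𝓘(ℝ, E) x).source ∩ (extChartAt 𝓘(ℝ, E) y).source :=
    ⟨mem_extChartAt_source x, h⟩
  have hx' : x' ∈ (extChartAt 𝓘(ℝ, E') x').source ∩ (extChartAt 𝓘(ℝ, E') y').source :=
    ⟨mem_extChartAt_source x', h'⟩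
  have H1 : HasFDerivAt (extChartAt 𝓘(ℝ, E) y ∘ (extChartAt 𝓘(ℝ, E) x).symm)
      (tangentCoordChange 𝓘(ℝ, E) x y x) (extChartAt 𝓘(ℝ, E) x x) := by
    have := hasFDerivWithinAt_tangentCoordChange hx
    rwa [ModelWithCorners.Boundaryless.range_eq_univ, hasFDerivWithinAt_univ] at this
  have H2 : HasFDerivAt (extChartAt 𝓘(ℝ, E') y' ∘ (extChartAt 𝓘(ℝ, E') x').symm)
      (tangentCoordChange 𝓘(ℝ, E') x' y' x') (extChartAt 𝓘(ℝ, E') x' x') := by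
    have := hasFDerivWithinAt_tangentCoordChange hx'
    rwa [ModelWithCorners.Boundaryless.range_eq_univ, hasFDerivWithinAt_univ] at this
  have H : HasFDerivAt
      (Prod.map (extChartAt 𝓘(ℝ, E) y ∘ (extChartAt 𝓘(ℝ, E) x).symm)
        (extChartAt 𝓘(ℝ, E') y' ∘ (extChartAt 𝓘(ℝ, E') x').symm))
      ((tangentCoordChange 𝓘(ℝ, E) x y x).prodMap (tangentCoordChange 𝓘(ℝ, E') x' y' x'))
      (extChartAt 𝓘(ℝ, E) x x, extChartAt 𝓘(ℝ, E') x' x') :=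
    HasFDerivAt.prodMap _ H1 H2
  have hfun : (extChartAt ((𝓘(ℝ, E)).prod (𝓘(ℝ, E'))) (y, y') ∘
      (extChartAt ((𝓘(ℝ, E)).prod (𝓘(ℝ, E'))) (x, x')).symm) =
      Prod.map (extChartAt 𝓘(ℝ, E) y ∘ (extChartAt 𝓘(ℝ, E) x).symm)
        (extChartAt 𝓘(ℝ, E') y' ∘ (extChartAt 𝓘(ℝ, E') x').symm) := by
    funext a
    rfl
  have hpt : extChartAt ((𝓘(ℝ, E)).prod (𝓘(ℝ, E'))) (x, x') (x, x') =
      (extChartAt 𝓘(ℝ, E) x x, extChartAt 𝓘(ℝ, E') x' x') := by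
    simp [extChartAt_prod]
  rw [tangentCoordChange_def, ModelWithCorners.Boundaryless.range_eq_univ, fderivWithin_univ,
    hfun, hpt, H.fderiv]
  rfl

end Aux

theorem tangentBundle_prod_diffeomorph
    {E : Type*} [NormedAddCommGroup E] [NormedSpace ℝ E] [FiniteDimensional ℝ E]
    {E' : Type*} [NormedAddCommGroup E'] [NormedSpace ℝ E'] [FiniteDimensional ℝ E']
    {M : Type*} [TopologicalSpace M] [ChartedSpace E M]
    [IsManifold (𝓘(ℝ, E)) (⊤ : ℕ∞) M] [BoundarylessManifold (𝓘(ℝ, E)) M]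
    {M' : Type*} [TopologicalSpace M'] [ChartedSpace E' M']
    [IsManifold (𝓘(ℝ, E')) (⊤ : ℕ∞) M'] [BoundarylessManifold (𝓘(ℝ, E')) M'] :
    ∃ Φ : Diffeomorph ((𝓘(ℝ, E)).prod (𝓘(ℝ, E'))).tangent
        ((𝓘(ℝ, E)).tangent.prod ((𝓘(ℝ, E')).tangent))
        (TangentBundle ((𝓘(ℝ, E)).prod (𝓘(ℝ, E'))) (M × M'))
        (TangentBundle (𝓘(ℝ, E)) M × TangentBundle (𝓘(ℝ, E')) M') (⊤ : ℕ∞),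
      ∀ (x : M) (x' : M') (v : E) (v' : E'),
        Φ ⟨(x, x'), (v, v')⟩ = (⟨x, v⟩, ⟨x', v'⟩) := by
  set I := 𝓘(ℝ, E)
  set I' := 𝓘(ℝ, E')
  -- forward and inverse maps
  let φ : TangentBundle (I.prod I') (M × M') →
      TangentBundle I M × TangentBundle I' M' :=
    fun p => (⟨p.proj.1, p.2.1⟩, ⟨p.proj.2, p.2.2⟩)
  let ψ : TangentBundle I M × TangentBundle I' M' →
      TangentBundle (I.prod I') (M × M') :=
    fun q => ⟨(q.1.proj, q.2.proj), (q.1.2, q.2.2)⟩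
  have hφ : ContMDiff (I.prod I').tangent (I.tangent.prod I'.tangent) (⊤ : ℕ∞) φ := by
    have h1 : ContMDiff (I.prod I').tangent I.tangent (⊤ : ℕ∞)
        (tangentMap (I.prod I') I Prod.fst) :=
      (contMDiff_fst (I := I) (J := I') (M := M) (N := M')).contMDiff_tangentMap (n := (⊤ : ℕ∞)) (by simp)
    have h2 : ContMDiff (I.prod I').tangent I'.tangent (⊤ : ℕ∞)
        (tangentMap (I.prod I') I' Prod.snd) :=
      (contMDiff_snd (I := I) (J := I') (M := M) (N := M')).contMDiff_tangentMap (n := (⊤ : ℕ∞)) (by simp)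
    have : φ = fun p => (tangentMap (I.prod I') I Prod.fst p,
        tangentMap (I.prod I') I' Prod.snd p) := by
      funext p
      simp [φ, tangentMap_prodFst, tangentMap_prodSnd]
    rw [this]
    exact h1.prodMk h2
  have hψ : ContMDiff (I.tangent.prod I'.tangent) (I.prod I').tangent (⊤ : ℕ∞) ψ := by
    intro q₀
    rw [Bundle.contMDiffAt_totalSpace]
    constructor
    · exact ((Bundle.contMDiff_proj _).comp contMDiff_fst).prodMk
        ((Bundle.contMDiff_proj _).comp contMDiff_snd) q₀
    · -- the fiber-coordinate representation
      have hidM : ContMDiffAt I.tangent 𝓘(ℝ, E) (⊤ : ℕ∞)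
          (fun p : TangentBundle I M =>
            (trivializationAt E (TangentSpace I) q₀.1.proj p).2) q₀.1 := by
        have := (Bundle.contMDiffAt_totalSpace (IB := I) (F := E) (E := TangentSpace I) (n := (⊤ : ℕ∞))
          (f := (id : TangentBundle I M → TangentBundle I M)) (x₀ := q₀.1)).mp contMDiffAt_id
        exact this.2
      have hidM' : ContMDiffAt I'.tangent 𝓘(ℝ, E') (⊤ : ℕ∞)
          (fun p : TangentBundle I' M' =>
            (trivializationAt E' (TangentSpace I') q₀.2.proj p).2) q₀.2 := by
        have := (Bundle.contMDiffAt_totalSpace (IB := I') (F := E') (E := TangentSpace I') (n := (⊤ : ℕ∞))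
          (f := (id : TangentBundle I' M' → TangentBundle I' M')) (x₀ := q₀.2)).mp contMDiffAt_id
        exact this.2
      have hsmooth : ContMDiffAt (I.tangent.prod I'.tangent) 𝓘(ℝ, E × E') (⊤ : ℕ∞)
          (fun q : TangentBundle I M × TangentBundle I' M' =>
            ((trivializationAt E (TangentSpace I) q₀.1.proj q.1).2,
             (trivializationAt E' (TangentSpace I') q₀.2.proj q.2).2)) q₀ :=
        ((hidM.comp q₀ contMDiffAt_fst).prodMk_space (hidM'.comp q₀ contMDiffAt_snd))
      refine ContMDiffAt.congr_of_eventuallyEq hsmooth ?_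
      have hmem : {q : TangentBundle I M × TangentBundle I' M' |
          q.1.proj ∈ (extChartAt I q₀.1.proj).source ∧
          q.2.proj ∈ (extChartAt I' q₀.2.proj).source} ∈ nhds q₀ := by
        refine IsOpen.mem_nhds ?_ ?_
        · refine IsOpen.inter ?_ ?_
          · exact (isOpen_extChartAt_source q₀.1.proj).preimage
              ((FiberBundle.continuous_proj E (TangentSpace I)).comp continuous_fst)
          · exact (isOpen_extChartAt_source q₀.2.proj).preimage
              ((FiberBundle.continuous_proj E' (TangentSpace I')).comp continuous_snd)
        · exact ⟨mem_extChartAt_source _, mem_extChartAt_source _⟩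
      filter_upwards [hmem] with q hq
      have := tangentCoordChange_prod_aux (M := M) (M' := M')
        (x := q.1.proj) (y := q₀.1.proj) (x' := q.2.proj) (y' := q₀.2.proj)
        hq.1 hq.2 q.1.2 q.2.2
      exact this
  refine ⟨⟨⟨φ, ψ, ?_, ?_⟩, hφ, hψ⟩, ?_⟩
  · rintro ⟨⟨x, x'⟩, v, v'⟩; rfl
  · rintro ⟨⟨x, v⟩, ⟨x', v'⟩⟩; rfl
  · intro x x' v v'; rfl
end
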